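/- Let α ∈ (0, 1/2), T > 0, η₀ ∈ ℝ, let b : ℝ → ℝ be twice continuously differentiable with bounded first and second derivatives, and let ζ, h : [0,T] → ℝ be (1−α)-Hölder continuous. For each ε ∈ ℝ let x^ε : [0,T] → ℝ be the unique continuous solution of x^ε_t = η₀ + ζ_t + ε h_t + ∫₀ᵗ b(x^ε_s) ds. Then the difference quotients (x^ε − x^0)/ε converge uniformly on [0,T], as ε → 0, to the unique continuous solution v of the linear equation v_t = h_t + ∫₀ᵗ b'(x^0_s) v_s ds; i.e., the solution map is differentiable in the direction h with derivative v. -/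

import Mathlib

open MeasureTheory Set Filter Topology

noncomputable section

lemma ftc_cont {f : ℝ → ℝ} (hf : Continuous f) (t : ℝ) :
    HasDerivAt (fun u => ∫ s in (0:ℝ)..u, f s) (f t) t :=
  intervalIntegral.integral_hasDerivAt_right (hf.intervalIntegrable _ _)
    (hf.stronglyMeasurableAtFilter _ _) hf.continuousAt

lemma my_gronwall {T M A : ℝ} {u : ℝ → ℝ} (hM : 0 ≤ M) (hA : 0 ≤ A)
    (hu : Continuous u) (hnn : ∀ t ∈ Icc (0:ℝ) T, 0 ≤ u t)
    (hineq : ∀ t ∈ Icc (0:ℝ) T, u t ≤ A + M * ∫ s in (0:ℝ)..t, u s) :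
    ∀ t ∈ Icc (0:ℝ) T, u t ≤ A * Real.exp (M * T) := by
  intro t ht
  set U : ℝ → ℝ := fun t => ∫ s in (0:ℝ)..t, u s with hUdef
  have hUd : ∀ s, HasDerivAt U (u s) s := ftc_cont hu
  have hUc : Continuous U := continuous_iff_continuousAt.2 fun s => (hUd s).continuousAt
  have hUnn : ∀ s ∈ Icc (0:ℝ) T, 0 ≤ U s := by
    intro s hs
    exact intervalIntegral.integral_nonneg hs.1 fun r hr => hnn r ⟨hr.1, hr.2.trans hs.2⟩
  have key : ∀ s ∈ Icc (0:ℝ) T, ‖U s‖ ≤ gronwallBound 0 M A (s - 0) := by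
    apply norm_le_gronwallBound_of_norm_deriv_right_le hUc.continuousOn
      (fun s _ => (hUd s).hasDerivWithinAt)
    · simp [hUdef]
    · intro s hs
      have h1 := hineq s ⟨hs.1, hs.2.le⟩
      have h2 := hUnn s ⟨hs.1, hs.2.le⟩
      rw [Real.norm_eq_abs, Real.norm_eq_abs, abs_of_nonneg (hnn s ⟨hs.1, hs.2.le⟩),
        abs_of_nonneg h2]
      linarith
  have hgb : A + M * gronwallBound 0 M A (t - 0) = A * Real.exp (M * t) := by
    rcases eq_or_ne M 0 with hM0 | hM0
    · simp [hM0, gronwallBound_K0]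
    · rw [gronwallBound_of_K_ne_0 hM0]
      field_simp
      ring
  have h2 := hUnn t ht
  have h3 := key t ht
  rw [Real.norm_eq_abs, abs_of_nonneg h2] at h3
  have h4 : u t ≤ A * Real.exp (M * t) := by
    have := hineq t ht
    nlinarith
  refine h4.trans ?_
  have : Real.exp (M * t) ≤ Real.exp (M * T) :=
    Real.exp_le_exp.2 (mul_le_mul_of_nonneg_left ht.2 hM)
  nlinarith [Real.exp_pos (M * t)]

lemma holder_continuousOn {γ a b : ℝ} {f : ℝ → ℝ} (hγ : 0 < γ)
    (hf : ∃ C : ℝ, 0 ≤ C ∧ ∀ s ∈ Set.Icc a b, ∀ t ∈ Set.Icc a b, |f t - f s| ≤ C * |t - s| ^ γ) :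
    ContinuousOn f (Icc a b) := by
  obtain ⟨C, hC, hfC⟩ := hf
  intro s hs
  have h1 : Tendsto (fun t : ℝ => |t - s|) (nhdsWithin s (Icc a b)) (nhds 0) := by
    have : Tendsto (fun t : ℝ => |t - s|) (nhds s) (nhds 0) := by
      have hc : Continuous (fun t : ℝ => |t - s|) :=
        (continuous_id.sub continuous_const).abs
      have := hc.tendsto s
      simpa using this
    exact this.mono_left nhdsWithin_le_nhds
  have h2 : Tendsto (fun t : ℝ => C * |t - s| ^ γ) (nhdsWithin s (Icc a b)) (nhds 0) := by
    have hr : Tendsto (fun d : ℝ => d ^ γ) (nhds 0) (nhds 0) := by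
      have := (Real.continuousAt_rpow_const 0 γ (Or.inr hγ.le)).tendsto
      simpa [Real.zero_rpow hγ.ne'] using this
    have := (hr.comp h1).const_mul C
    simpa using this
  have h3 : Tendsto (fun t => f t - f s) (nhdsWithin s (Icc a b)) (nhds 0) := by
    apply squeeze_zero_norm' _ h2
    filter_upwards [self_mem_nhdsWithin] with t ht
    exact hfC s hs t ht
  have : Tendsto f (nhdsWithin s (Icc a b)) (nhds (f s)) := by
    have := h3.add_const (f s)
    simpa using this
  exact this

lemma lip_of_deriv {f : ℝ → ℝ} {M : ℝ} (hf : Differentiable ℝ f)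
    (hM : ∀ x, |deriv f x| ≤ M) (a c : ℝ) : |f c - f a| ≤ M * |c - a| := by
  have := Convex.norm_image_sub_le_of_norm_deriv_le (s := univ)
    (fun x _ => (hf x)) (fun x _ => by simpa [Real.norm_eq_abs] using hM x)
    convex_univ (mem_univ a) (mem_univ c)
  simpa [Real.norm_eq_abs] using this

lemma taylor_bound {b : ℝ → ℝ} {M : ℝ} (hb : Differentiable ℝ b)
    (hb1 : Differentiable ℝ (deriv b))
    (hM : ∀ x, |deriv (deriv b) x| ≤ M) (a c : ℝ) :
    |b c - b a - deriv b a * (c - a)| ≤ M * (c - a) ^ 2 := by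
  set φ : ℝ → ℝ := fun u => b u - deriv b a * u with hφ
  have hφd : ∀ u, HasDerivAt φ (deriv b u - deriv b a) u := fun u => by
    have hd := (hb u).hasDerivAt.sub ((hasDerivAt_id u).const_mul (deriv b a))
    rw [mul_one] at hd
    exact hd
  have key := Convex.norm_image_sub_le_of_norm_hasDerivWithin_le
    (f := φ) (f' := fun u => deriv b u - deriv b a) (s := uIcc a c) (C := M * |c - a|)
    (fun u _ => (hφd u).hasDerivWithinAt)
    (fun u hu => by
      have h1 : |deriv b u - deriv b a| ≤ M * |u - a| := lip_of_deriv hb1 hM a u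
      have h2 : |u - a| ≤ |c - a| := by
        rcases le_total a c with hac | hac
        · rw [uIcc_of_le hac] at hu
          rw [abs_of_nonneg (by linarith [hu.1]), abs_of_nonneg (by linarith)]
          linarith [hu.2]
        · rw [uIcc_of_ge hac] at hu
          rw [abs_of_nonpos (by linarith [hu.2]), abs_of_nonpos (by linarith)]
          linarith [hu.1]
      have hM0 : 0 ≤ M := (abs_nonneg _).trans (hM a)
      rw [Real.norm_eq_abs]
      exact h1.trans (by nlinarith [abs_nonneg (u - a)]))
    (convex_uIcc a c) (left_mem_uIcc) (right_mem_uIcc)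
  have heq : φ c - φ a = b c - b a - deriv b a * (c - a) := by simp [hφ]; ring
  rw [heq, Real.norm_eq_abs, Real.norm_eq_abs] at key
  calc |b c - b a - deriv b a * (c - a)| ≤ M * |c - a| * |c - a| := key
    _ = M * (c - a) ^ 2 := by rw [mul_assoc, ← sq, sq_abs]

example {b : ℝ → ℝ} (hb : ContDiff ℝ 2 b) : Differentiable ℝ (deriv b) ∧ Continuous (deriv b) := by
  have h2 : ContDiff ℝ (1 + 1) b := by norm_num; exact hb
  have := (contDiff_succ_iff_deriv.mp h2).2.2
  exact ⟨this.differentiable (by norm_num), hb.continuous_deriv one_le_two⟩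

/-- `f` is `γ`-Hölder continuous on `[a,b]`. -/
def HolderOnIcc (γ a b : ℝ) (f : ℝ → ℝ) : Prop :=
  ∃ C : ℝ, 0 ≤ C ∧ ∀ s ∈ Set.Icc a b, ∀ t ∈ Set.Icc a b, |f t - f s| ≤ C * |t - s| ^ γ

/-- Directional differentiability of the solution map: if `x^ε` solves
`x^ε_t = η₀ + ζ_t + ε h_t + ∫₀ᵗ b(x^ε_s) ds`, then the difference quotients
`(x^ε - x^0)/ε` converge uniformly on `[0,T]`, as `ε → 0`, to the unique continuous
solution `v` of `v_t = h_t + ∫₀ᵗ b'(x^0_s) v_s ds`. -/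
theorem directional_derivative_of_solution
    (α T η₀ : ℝ) (hα : α ∈ Set.Ioo (0 : ℝ) (1 / 2)) (hT : 0 < T)
    (b : ℝ → ℝ) (hb : ContDiff ℝ 2 b)
    (hb' : ∃ M : ℝ, ∀ x : ℝ, |deriv b x| ≤ M ∧ |deriv (deriv b) x| ≤ M)
    (ζ h : ℝ → ℝ)
    (hζ : HolderOnIcc (1 - α) 0 T ζ) (hh : HolderOnIcc (1 - α) 0 T h)
    (x : ℝ → ℝ → ℝ)
    (hx_cont : ∀ ε : ℝ, ContinuousOn (x ε) (Set.Icc 0 T))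
    (hx : ∀ ε : ℝ, ∀ t ∈ Set.Icc 0 T,
      x ε t = η₀ + ζ t + ε * h t + ∫ s in (0 : ℝ)..t, b (x ε s)) :
    ∃ v : ℝ → ℝ, ContinuousOn v (Set.Icc 0 T) ∧
      (∀ t ∈ Set.Icc 0 T,
        v t = h t + ∫ s in (0 : ℝ)..t, deriv b (x 0 s) * v s) ∧
      (∀ v' : ℝ → ℝ, ContinuousOn v' (Set.Icc 0 T) →
        (∀ t ∈ Set.Icc 0 T,
          v' t = h t + ∫ s in (0 : ℝ)..t, deriv b (x 0 s) * v' s) →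
        ∀ t ∈ Set.Icc 0 T, v' t = v t) ∧
      Filter.Tendsto
        (fun ε => sSup ((fun t => |(x ε t - x 0 t) / ε - v t|) '' Set.Icc 0 T))
        (nhdsWithin 0 {(0 : ℝ)}ᶜ) (nhds 0) := by
  obtain ⟨M, hM⟩ := hb'
  have hM0 : 0 ≤ M := (abs_nonneg _).trans (hM 0).1
  have hbdiff : Differentiable ℝ b := hb.differentiable (by norm_num)
  have hb2 : ContDiff ℝ (1 + 1) b := by norm_num; exact hb
  have hb1 : Differentiable ℝ (deriv b) :=
    ((contDiff_succ_iff_deriv.mp hb2).2.2).differentiable (by norm_num)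
  have hdc : Continuous (deriv b) := hb.continuous_deriv one_le_two
  set p : ℝ → ℝ := fun t => max 0 (min t T) with hp
  have pc : Continuous p := continuous_const.max (continuous_id.min continuous_const)
  have pmem : ∀ t, p t ∈ Icc (0:ℝ) T := fun t =>
    ⟨le_max_left _ _, max_le hT.le (min_le_right _ _)⟩
  have pid : ∀ t ∈ Icc (0:ℝ) T, p t = t := fun t ht => by
    simp [hp, min_eq_left ht.2, max_eq_right ht.1]
  have hhc : ContinuousOn h (Icc 0 T) := holder_continuousOn (by linarith [hα.2]) hh
  have hx0c := hx_cont 0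
  have hqc : Continuous (fun s => x 0 (p s)) := hx0c.comp_continuous pc pmem
  set g : ℝ → ℝ := fun s => deriv b (x 0 (p s)) with hg
  have gc : Continuous g := hdc.comp hqc
  have hbarc : Continuous (fun s => h (p s)) := hhc.comp_continuous pc pmem
  set B : ℝ → ℝ := fun t => ∫ s in (0:ℝ)..t, g s with hB
  have hBd : ∀ t, HasDerivAt B (g t) t := ftc_cont gc
  have Bc : Continuous B := continuous_iff_continuousAt.2 fun s => (hBd s).continuousAt
  set F : ℝ → ℝ := fun t => ∫ s in (0:ℝ)..t, g s * h (p s) * Real.exp (-B s) with hF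
  have hFintc : Continuous (fun s => g s * h (p s) * Real.exp (-B s)) :=
    (gc.mul hbarc).mul (Real.continuous_exp.comp Bc.neg)
  have hFd : ∀ t, HasDerivAt F (g t * h (p t) * Real.exp (-B t)) t := ftc_cont hFintc
  have Fc : Continuous F := continuous_iff_continuousAt.2 fun s => (hFd s).continuousAt
  set v : ℝ → ℝ := fun t => h (p t) + Real.exp (B t) * F t with hv
  have vc : Continuous v := hbarc.add ((Real.continuous_exp.comp Bc).mul Fc)
  have hVd : ∀ t, HasDerivAt (fun t => Real.exp (B t) * F t) (g t * v t) t := by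
    intro t
    have h1 := (hBd t).exp.mul (hFd t)
    refine h1.congr_deriv ?_
    have he : Real.exp (B t) * Real.exp (-B t) = 1 := by
      rw [← Real.exp_add]; simp
    simp only [hv]
    linear_combination (g t * h (p t)) * he
  have hVeq : ∀ t, Real.exp (B t) * F t = ∫ s in (0:ℝ)..t, g s * v s := by
    intro t
    have hi : IntervalIntegrable (fun s => g s * v s) volume 0 t :=
      (gc.mul vc).intervalIntegrable _ _
    have h2 := intervalIntegral.integral_eq_sub_of_hasDerivAt
      (f := fun t => Real.exp (B t) * F t) (fun s _ => hVd s) hi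
    rw [h2]
    simp [hF]
  have huIcc : ∀ t ∈ Icc (0:ℝ) T, uIcc (0:ℝ) t ⊆ Icc (0:ℝ) T := by
    intro t ht
    rw [uIcc_of_le ht.1]
    exact Icc_subset_Icc le_rfl ht.2
  have hveq : ∀ t ∈ Icc (0:ℝ) T, v t = h t + ∫ s in (0:ℝ)..t, deriv b (x 0 s) * v s := by
    intro t ht
    have hcongr : (∫ s in (0:ℝ)..t, g s * v s) = ∫ s in (0:ℝ)..t, deriv b (x 0 s) * v s := by
      apply intervalIntegral.integral_congr
      intro s hs
      simp only [hg]
      rw [pid s (huIcc t ht hs)]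
    simp only [hv]
    rw [pid t ht, hVeq t, hcongr]
  have hdint : ContinuousOn (fun s => deriv b (x 0 s)) (Icc 0 T) := hdc.comp_continuousOn hx0c
  have huniq : ∀ v' : ℝ → ℝ, ContinuousOn v' (Icc 0 T) →
      (∀ t ∈ Icc (0:ℝ) T, v' t = h t + ∫ s in (0:ℝ)..t, deriv b (x 0 s) * v' s) →
      ∀ t ∈ Icc (0:ℝ) T, v' t = v t := by
    intro v' hv'c hv'eq
    set u : ℝ → ℝ := fun s => |v' (p s) - v (p s)| with hu
    have huc : Continuous u := ((hv'c.comp_continuous pc pmem).sub (vc.comp pc)).abs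
    have key : ∀ t ∈ Icc (0:ℝ) T, u t ≤ 0 + M * ∫ s in (0:ℝ)..t, u s := by
      intro t ht
      have hsub := huIcc t ht
      have hint1 : IntervalIntegrable (fun s => deriv b (x 0 s) * v' s) volume 0 t :=
        ((hdint.mono hsub).mul (hv'c.mono hsub)).intervalIntegrable
      have hint2 : IntervalIntegrable (fun s => deriv b (x 0 s) * v s) volume 0 t :=
        ((hdint.mono hsub).mul vc.continuousOn).intervalIntegrable
      have heq : v' t - v t = ∫ s in (0:ℝ)..t, deriv b (x 0 s) * (v' s - v s) := by
        have h2 : (∫ s in (0:ℝ)..t, deriv b (x 0 s) * (v' s - v s))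
            = (∫ s in (0:ℝ)..t, deriv b (x 0 s) * v' s)
              - ∫ s in (0:ℝ)..t, deriv b (x 0 s) * v s := by
          rw [← intervalIntegral.integral_sub hint1 hint2]
          apply intervalIntegral.integral_congr
          intro s _
          ring
        rw [hv'eq t ht, hveq t ht, h2]
        ring
      have hintabs : IntervalIntegrable (fun s => |deriv b (x 0 s) * (v' s - v s)|) volume 0 t :=
        (((hdint.mono hsub).mul ((hv'c.mono hsub).sub vc.continuousOn)).abs).intervalIntegrable
      have hintMu : IntervalIntegrable (fun s => M * u s) volume 0 t :=
        (continuous_const.mul huc).intervalIntegrable _ _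
      have hbound : ∀ s ∈ Icc (0:ℝ) t, |deriv b (x 0 s) * (v' s - v s)| ≤ M * u s := by
        intro s hs
        have hsT : s ∈ Icc (0:ℝ) T := ⟨hs.1, hs.2.trans ht.2⟩
        rw [abs_mul]
        simp only [hu]
        rw [pid s hsT]
        exact mul_le_mul_of_nonneg_right (hM _).1 (abs_nonneg _)
      have h1 : |v' t - v t| ≤ ∫ s in (0:ℝ)..t, M * u s := by
        rw [heq]
        calc |∫ s in (0:ℝ)..t, deriv b (x 0 s) * (v' s - v s)|
            ≤ ∫ s in (0:ℝ)..t, |deriv b (x 0 s) * (v' s - v s)| :=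
              intervalIntegral.abs_integral_le_integral_abs ht.1
          _ ≤ ∫ s in (0:ℝ)..t, M * u s :=
              intervalIntegral.integral_mono_on ht.1 hintabs hintMu hbound
      rw [intervalIntegral.integral_const_mul] at h1
      have hut : u t = |v' t - v t| := by simp only [hu]; rw [pid t ht]
      linarith
    have hgr := my_gronwall hM0 le_rfl huc (fun _ _ => abs_nonneg _) key
    intro t ht
    have h2 := hgr t ht
    rw [zero_mul] at h2
    have hut : u t = |v' t - v t| := by simp only [hu]; rw [pid t ht]
    rw [hut] at h2
    have := abs_nonneg (v' t - v t)
    have h3 : |v' t - v t| = 0 := le_antisymm h2 this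
    have h4 := abs_eq_zero.mp h3
    linarith
  -- Convergence of difference quotients
  obtain ⟨H0, hH0⟩ := isCompact_Icc.exists_bound_of_continuousOn hhc
  set H : ℝ := max H0 0 with hHdef
  have hHnn : 0 ≤ H := le_max_right _ _
  have hH : ∀ t ∈ Icc (0:ℝ) T, |h t| ≤ H := fun t ht =>
    le_trans (by simpa using hH0 t ht) (le_max_left _ _)
  set K : ℝ := H * Real.exp (M * T) with hKdef
  have hKnn : 0 ≤ K := by positivity
  set C₀ : ℝ := T * M * K ^ 2 * Real.exp (M * T) with hC₀def
  have hC₀nn : 0 ≤ C₀ := by positivity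
  have hbxc : ∀ ε : ℝ, ContinuousOn (fun s => b (x ε s)) (Icc 0 T) := fun ε =>
    hb.continuous.comp_continuousOn (hx_cont ε)
  have hdiff : ∀ ε : ℝ, ∀ t ∈ Icc (0:ℝ) T,
      x ε t - x 0 t = ε * h t + ∫ s in (0:ℝ)..t, (b (x ε s) - b (x 0 s)) := by
    intro ε t ht
    have hiε : IntervalIntegrable (fun s => b (x ε s)) volume 0 t :=
      ((hbxc ε).mono (huIcc t ht)).intervalIntegrable
    have hi0 : IntervalIntegrable (fun s => b (x 0 s)) volume 0 t :=
      ((hbxc 0).mono (huIcc t ht)).intervalIntegrable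
    rw [hx ε t ht, hx 0 t ht, intervalIntegral.integral_sub hiε hi0]
    ring
  have stepA : ∀ ε : ℝ, ∀ t ∈ Icc (0:ℝ) T, |x ε t - x 0 t| ≤ |ε| * K := by
    intro ε
    set u1 : ℝ → ℝ := fun s => |x ε (p s) - x 0 (p s)| with hu1
    have hu1c : Continuous u1 := (((hx_cont ε).comp_continuous pc pmem).sub hqc).abs
    have key : ∀ t ∈ Icc (0:ℝ) T, u1 t ≤ |ε| * H + M * ∫ s in (0:ℝ)..t, u1 s := by
      intro t ht
      have hsub := huIcc t ht
      have hbound : ∀ s ∈ Icc (0:ℝ) t, |b (x ε s) - b (x 0 s)| ≤ M * u1 s := by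
        intro s hs
        have hsT : s ∈ Icc (0:ℝ) T := ⟨hs.1, hs.2.trans ht.2⟩
        have hl := lip_of_deriv hbdiff (fun y => (hM y).1) (x 0 s) (x ε s)
        simp only [hu1]
        rw [pid s hsT]
        exact hl
      have hintabs : IntervalIntegrable (fun s => |b (x ε s) - b (x 0 s)|) volume 0 t :=
        ((((hbxc ε).mono hsub).sub ((hbxc 0).mono hsub)).abs).intervalIntegrable
      have hintMu : IntervalIntegrable (fun s => M * u1 s) volume 0 t :=
        (continuous_const.mul hu1c).intervalIntegrable _ _
      have h1 : |∫ s in (0:ℝ)..t, (b (x ε s) - b (x 0 s))| ≤ ∫ s in (0:ℝ)..t, M * u1 s :=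
        calc |∫ s in (0:ℝ)..t, (b (x ε s) - b (x 0 s))|
            ≤ ∫ s in (0:ℝ)..t, |b (x ε s) - b (x 0 s)| :=
              intervalIntegral.abs_integral_le_integral_abs ht.1
          _ ≤ ∫ s in (0:ℝ)..t, M * u1 s :=
              intervalIntegral.integral_mono_on ht.1 hintabs hintMu hbound
      rw [intervalIntegral.integral_const_mul] at h1
      have hut : u1 t = |x ε t - x 0 t| := by simp only [hu1]; rw [pid t ht]
      have h2 : |x ε t - x 0 t| ≤ |ε * h t| + |∫ s in (0:ℝ)..t, (b (x ε s) - b (x 0 s))| := by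
        rw [hdiff ε t ht]
        exact abs_add_le _ _
      have h3 : |ε * h t| ≤ |ε| * H := by
        rw [abs_mul]
        exact mul_le_mul_of_nonneg_left (hH t ht) (abs_nonneg ε)
      linarith
    intro t ht
    have h2 := my_gronwall hM0 (by positivity) hu1c (fun _ _ => abs_nonneg _) key t ht
    have hut : u1 t = |x ε t - x 0 t| := by simp only [hu1]; rw [pid t ht]
    rw [hut] at h2
    calc |x ε t - x 0 t| ≤ |ε| * H * Real.exp (M * T) := h2
      _ = |ε| * K := by rw [hKdef]; ring
  have stepB : ∀ ε : ℝ, ε ≠ 0 → ∀ t ∈ Icc (0:ℝ) T,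
      |(x ε t - x 0 t) / ε - v t| ≤ C₀ * |ε| := by
    intro ε hε
    have hε' : (0:ℝ) < |ε| := abs_pos.2 hε
    set u2 : ℝ → ℝ := fun s => |(x ε (p s) - x 0 (p s)) / ε - v s| with hu2
    have hu2c : Continuous u2 :=
      (((((hx_cont ε).comp_continuous pc pmem).sub hqc).div_const ε).sub vc).abs
    have cint : ContinuousOn
        (fun s => (b (x ε s) - b (x 0 s)) / ε - deriv b (x 0 s) * v s) (Icc 0 T) :=
      ((((hbxc ε).sub (hbxc 0)).div_const ε).sub (hdint.mul vc.continuousOn))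
    have key : ∀ t ∈ Icc (0:ℝ) T,
        u2 t ≤ T * M * K ^ 2 * |ε| + M * ∫ s in (0:ℝ)..t, u2 s := by
      intro t ht
      have hsub := huIcc t ht
      have hint1 : IntervalIntegrable (fun s => (b (x ε s) - b (x 0 s)) / ε) volume 0 t :=
        ((((hbxc ε).sub (hbxc 0)).div_const ε).mono hsub).intervalIntegrable
      have hint2 : IntervalIntegrable (fun s => deriv b (x 0 s) * v s) volume 0 t :=
        ((hdint.mono hsub).mul vc.continuousOn).intervalIntegrable
      have heq : (x ε t - x 0 t) / ε - v t
          = ∫ s in (0:ℝ)..t, ((b (x ε s) - b (x 0 s)) / ε - deriv b (x 0 s) * v s) := by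
        rw [intervalIntegral.integral_sub hint1 hint2, intervalIntegral.integral_div,
          hveq t ht, hdiff ε t ht]
        field_simp
        ring
      have hbound : ∀ s ∈ Icc (0:ℝ) t,
          |(b (x ε s) - b (x 0 s)) / ε - deriv b (x 0 s) * v s|
            ≤ M * K ^ 2 * |ε| + M * u2 s := by
        intro s hs
        have hsT : s ∈ Icc (0:ℝ) T := ⟨hs.1, hs.2.trans ht.2⟩
        have htay := taylor_bound hbdiff hb1 (fun y => (hM y).2) (x 0 s) (x ε s)
        have hA := stepA ε s hsT
        have hps : p s = s := pid s hsT
        have hsplit : (b (x ε s) - b (x 0 s)) / ε - deriv b (x 0 s) * v s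
            = (b (x ε s) - b (x 0 s) - deriv b (x 0 s) * (x ε s - x 0 s)) / ε
              + deriv b (x 0 s) * ((x ε s - x 0 s) / ε - v s) := by
          field_simp
          ring
        have h1 : |(b (x ε s) - b (x 0 s) - deriv b (x 0 s) * (x ε s - x 0 s)) / ε|
            ≤ M * K ^ 2 * |ε| := by
          rw [abs_div, div_le_iff₀ hε']
          have hsq : (x ε s - x 0 s) ^ 2 ≤ (|ε| * K) ^ 2 := by
            nlinarith [abs_nonneg (x ε s - x 0 s), sq_abs (x ε s - x 0 s)]
          calc |b (x ε s) - b (x 0 s) - deriv b (x 0 s) * (x ε s - x 0 s)|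
              ≤ M * (x ε s - x 0 s) ^ 2 := htay
            _ ≤ M * (|ε| * K) ^ 2 := by nlinarith
            _ = M * K ^ 2 * |ε| * |ε| := by ring
        have h2 : |deriv b (x 0 s) * ((x ε s - x 0 s) / ε - v s)| ≤ M * u2 s := by
          rw [abs_mul]
          simp only [hu2]
          rw [hps]
          exact mul_le_mul_of_nonneg_right (hM _).1 (abs_nonneg _)
        calc |(b (x ε s) - b (x 0 s)) / ε - deriv b (x 0 s) * v s|
            = |(b (x ε s) - b (x 0 s) - deriv b (x 0 s) * (x ε s - x 0 s)) / ε
              + deriv b (x 0 s) * ((x ε s - x 0 s) / ε - v s)| := by rw [hsplit]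
          _ ≤ |(b (x ε s) - b (x 0 s) - deriv b (x 0 s) * (x ε s - x 0 s)) / ε|
              + |deriv b (x 0 s) * ((x ε s - x 0 s) / ε - v s)| := abs_add_le _ _
          _ ≤ M * K ^ 2 * |ε| + M * u2 s := add_le_add h1 h2
      have hintabs : IntervalIntegrable
          (fun s => |(b (x ε s) - b (x 0 s)) / ε - deriv b (x 0 s) * v s|) volume 0 t :=
        ((cint.mono hsub).abs).intervalIntegrable
      have hintrhs : IntervalIntegrable (fun s => M * K ^ 2 * |ε| + M * u2 s) volume 0 t :=
        (continuous_const.add (continuous_const.mul hu2c)).intervalIntegrable _ _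
      have h1 : |∫ s in (0:ℝ)..t, ((b (x ε s) - b (x 0 s)) / ε - deriv b (x 0 s) * v s)|
          ≤ ∫ s in (0:ℝ)..t, (M * K ^ 2 * |ε| + M * u2 s) :=
        calc |∫ s in (0:ℝ)..t, ((b (x ε s) - b (x 0 s)) / ε - deriv b (x 0 s) * v s)|
            ≤ ∫ s in (0:ℝ)..t, |(b (x ε s) - b (x 0 s)) / ε - deriv b (x 0 s) * v s| :=
              intervalIntegral.abs_integral_le_integral_abs ht.1
          _ ≤ ∫ s in (0:ℝ)..t, (M * K ^ 2 * |ε| + M * u2 s) :=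
              intervalIntegral.integral_mono_on ht.1 hintabs hintrhs hbound
      have h2 : (∫ s in (0:ℝ)..t, (M * K ^ 2 * |ε| + M * u2 s))
          = t * (M * K ^ 2 * |ε|) + M * ∫ s in (0:ℝ)..t, u2 s := by
        rw [intervalIntegral.integral_add (f := fun _ => M * K ^ 2 * |ε|) (g := fun s => M * u2 s)
          (intervalIntegrable_const)
          ((continuous_const.mul hu2c).intervalIntegrable _ _),
          intervalIntegral.integral_const, intervalIntegral.integral_const_mul]
        simp [smul_eq_mul]
      have h3 : t * (M * K ^ 2 * |ε|) ≤ T * (M * K ^ 2 * |ε|) :=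
        mul_le_mul_of_nonneg_right ht.2 (by positivity)
      have hut : u2 t = |(x ε t - x 0 t) / ε - v t| := by simp only [hu2]; rw [pid t ht]
      rw [hut, heq]
      calc |∫ s in (0:ℝ)..t, ((b (x ε s) - b (x 0 s)) / ε - deriv b (x 0 s) * v s)|
          ≤ t * (M * K ^ 2 * |ε|) + M * ∫ s in (0:ℝ)..t, u2 s := by rw [← h2]; exact h1
        _ ≤ T * M * K ^ 2 * |ε| + M * ∫ s in (0:ℝ)..t, u2 s := by
            have : ∫ s in (0:ℝ)..t, u2 s = ∫ s in (0:ℝ)..t, u2 s := rfl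
            linarith
    intro t ht
    have h2 := my_gronwall hM0 (by positivity) hu2c (fun _ _ => abs_nonneg _) key t ht
    have hut : u2 t = |(x ε t - x 0 t) / ε - v t| := by simp only [hu2]; rw [pid t ht]
    rw [hut] at h2
    calc |(x ε t - x 0 t) / ε - v t| ≤ T * M * K ^ 2 * |ε| * Real.exp (M * T) := h2
      _ = C₀ * |ε| := by rw [hC₀def]; ring
  refine ⟨v, vc.continuousOn, hveq, huniq, ?_⟩
  apply squeeze_zero'
  · filter_upwards [self_mem_nhdsWithin] with ε _
    apply Real.sSup_nonneg
    rintro y ⟨t, _, rfl⟩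
    exact abs_nonneg _
  · filter_upwards [self_mem_nhdsWithin] with ε hε
    have hε' : ε ≠ 0 := by simpa using hε
    apply Real.sSup_le
    · rintro y ⟨t, ht, rfl⟩
      exact stepB ε hε' t ht
    · positivity
  · have hcont : Tendsto (fun ε : ℝ => C₀ * |ε|) (nhds 0) (nhds (C₀ * |(0:ℝ)|)) :=
      (continuous_const.mul continuous_abs).tendsto 0
    simpa using hcont.mono_left nhdsWithin_le_nhds
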